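/- Let v, u be integrable functions on [0,∞) and suppose there exist constants m, M, n, N ∈ ℝ satisfying m ≤ v(x) ≤ M and n ≤ u(x) ≤ N for all x ∈ [0,∞). Then for all x > 0, α > 0, δ > 0, ρ > 0 and β, λ, η, k ∈ ℝ with η > −1, one has m · Λ_{x,k}^{ρ,λ}(δ,η) · ρJ_{η,k}^{α,β} u(x) + N · Λ_{x,k}^{ρ,β}(α,η) · ρJ_{η,k}^{δ,λ} v(x) ≥ m·N · Λ_{x,k}^{ρ,λ}(δ,η) · Λ_{x,k}^{ρ,β}(α,η) + ρJ_{η,k}^{δ,λ} v(x) · ρJ_{η,k}^{α,β} u(x). -/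

import Mathlib

open MeasureTheory Real Set

/-- Left-sided generalized Katugampola fractional integral
`ρJ_{η,k}^{α,β} v(x) = (ρ^{1−β} x^k / Γ(α)) ∫₀^x τ^{ρ(η+1)−1} (x^ρ − τ^ρ)^{α−1} v(τ) dτ`. -/
noncomputable def katJ (ρ α β η k x : ℝ) (v : ℝ → ℝ) : ℝ :=
  ρ ^ (1 - β) * x ^ k / Real.Gamma α *
    ∫ τ in (0:ℝ)..x, τ ^ (ρ * (η + 1) - 1) * (x ^ ρ - τ ^ ρ) ^ (α - 1) * v τ

/-- `Λ_{x,k}^{ρ,β}(α,η) = (Γ(η+1)/Γ(η+α+1)) ρ^{−β} x^{k+ρ(η+α)}`. -/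
noncomputable def katLambda (ρ β η k x α : ℝ) : ℝ :=
  Real.Gamma (η + 1) / Real.Gamma (η + α + 1) * ρ ^ (-β) * x ^ (k + ρ * (η + α))


lemma betaCpx_eq {a b : ℝ} (ha : 0 < a) (hb : 0 < b) :
    Complex.betaIntegral a b = ((∫ t in (0:ℝ)..1, t ^ (a-1) * (1-t) ^ (b-1) : ℝ) : ℂ) := by
  rw [Complex.betaIntegral, ← intervalIntegral.integral_ofReal]
  refine intervalIntegral.integral_congr fun t ht => ?_
  rw [uIcc_of_le zero_le_one] at ht
  rw [show ((a:ℂ)-1) = ((a-1:ℝ):ℂ) by push_cast; ring,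
    show ((b:ℂ)-1) = ((b-1:ℝ):ℂ) by push_cast; ring,
    show ((1:ℂ)-(t:ℂ)) = ((1-t:ℝ):ℂ) by push_cast; ring,
    ← Complex.ofReal_cpow ht.1, ← Complex.ofReal_cpow (by linarith [ht.2]),
    ← Complex.ofReal_mul]

lemma betaReal_val {a b : ℝ} (ha : 0 < a) (hb : 0 < b) :
    ∫ t in Ioo (0:ℝ) 1, t ^ (a-1) * (1-t) ^ (b-1)
      = Real.Gamma a * Real.Gamma b / Real.Gamma (a+b) := by
  have h := Complex.Gamma_mul_Gamma_eq_betaIntegral (s := (a:ℂ)) (t := (b:ℂ))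
    (by simpa using ha) (by simpa using hb)
  rw [betaCpx_eq ha hb, ← Complex.ofReal_add, Complex.Gamma_ofReal, Complex.Gamma_ofReal,
    Complex.Gamma_ofReal, ← Complex.ofReal_mul, ← Complex.ofReal_mul] at h
  have h' := Complex.ofReal_inj.mp h
  have hG : Real.Gamma (a+b) ≠ 0 := (Real.Gamma_pos_of_pos (by linarith)).ne'
  rw [intervalIntegral.integral_of_le zero_le_one, MeasureTheory.integral_Ioc_eq_integral_Ioo] at h'
  field_simp
  linarith [h']

lemma betaReal_int {a b : ℝ} (ha : 0 < a) (hb : 0 < b) :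
    IntegrableOn (fun t => t ^ (a-1) * (1-t) ^ (b-1)) (Ioo (0:ℝ) 1) := by
  have h := Complex.betaIntegral_convergent (u := (a:ℂ)) (v := (b:ℂ))
    (by simpa using ha) (by simpa using hb)
  have h1 : IntegrableOn (fun t : ℝ => ((t:ℂ)) ^ ((a:ℂ)-1) * ((1:ℂ)-t) ^ ((b:ℂ)-1)) (Ioo (0:ℝ) 1) := by
    have := (intervalIntegrable_iff_integrableOn_Ioo_of_le zero_le_one).mp h
    exact this
  have h2 : IntegrableOn (fun t : ℝ => ((t ^ (a-1) * (1-t) ^ (b-1) : ℝ) : ℂ)) (Ioo (0:ℝ) 1) := by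
    refine h1.congr_fun (fun t ht => ?_) measurableSet_Ioo
    beta_reduce
    rw [show ((a:ℂ)-1) = ((a-1:ℝ):ℂ) by push_cast; ring,
      show ((b:ℂ)-1) = ((b-1:ℝ):ℂ) by push_cast; ring,
      show ((1:ℂ)-(t:ℂ)) = ((1-t:ℝ):ℂ) by push_cast; ring,
      ← Complex.ofReal_cpow ht.1.le, ← Complex.ofReal_cpow (by linarith [ht.2]),
      ← Complex.ofReal_mul]
  have h3 : Integrable (fun t : ℝ => ((t ^ (a-1) * (1-t) ^ (b-1) : ℝ) : ℂ)) (volume.restrict (Ioo (0:ℝ) 1)) := h2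
  have := h3.re
  refine MeasureTheory.IntegrableOn.congr_fun this (fun t _ => ?_) measurableSet_Ioo
  simp


lemma kernelKey {x ρ α η : ℝ} (hx : 0 < x) (hρ : 0 < ρ) (hα : 0 < α) (hη : -1 < η) :
    IntegrableOn (fun τ => τ ^ (ρ * (η + 1) - 1) * (x ^ ρ - τ ^ ρ) ^ (α - 1)) (Ioo (0:ℝ) x)
    ∧ ∫ τ in Ioo (0:ℝ) x, τ ^ (ρ * (η + 1) - 1) * (x ^ ρ - τ ^ ρ) ^ (α - 1)
        = Real.Gamma (η+1) * Real.Gamma α / Real.Gamma (η+α+1) * x ^ (ρ*(η+α)) / ρ := by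
  set K : ℝ → ℝ := fun τ => τ ^ (ρ * (η + 1) - 1) * (x ^ ρ - τ ^ ρ) ^ (α - 1) with hK
  set g : ℝ → ℝ := fun t => t ^ ((η+1)-1) * (1-t) ^ (α-1) with hg
  set f : ℝ → ℝ := fun τ => (τ/x) ^ ρ with hf
  set f' : ℝ → ℝ := fun τ => ρ * (τ/x) ^ (ρ-1) * (1/x) with hf'
  have hderiv : ∀ τ ∈ Ioo (0:ℝ) x, HasDerivWithinAt f (f' τ) (Ioo (0:ℝ) x) τ := by
    rintro τ ⟨hτ0, hτx⟩
    have h0 : τ / x ≠ 0 := by positivity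
    have h := ((hasDerivAt_id τ).div_const x).rpow_const (p := ρ) (Or.inl h0)
    simp only [id_eq] at h
    have he : f' τ = 1 / x * ρ * (τ / x) ^ (ρ - 1) := by rw [hf']; ring
    rw [he]
    exact h.hasDerivWithinAt
  have hinj : InjOn f (Ioo (0:ℝ) x) := by
    have : StrictMonoOn f (Ioo (0:ℝ) x) := by
      rintro a ⟨ha0, _⟩ b ⟨hb0, _⟩ hab
      exact Real.rpow_lt_rpow (by positivity) ((div_lt_div_iff_of_pos_right hx).mpr hab) hρ
    exact this.injOn
  have himg : f '' Ioo (0:ℝ) x = Ioo (0:ℝ) 1 := by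
    ext t
    constructor
    · rintro ⟨τ, ⟨hτ0, hτx⟩, rfl⟩
      exact ⟨Real.rpow_pos_of_pos (by positivity) ρ,
        Real.rpow_lt_one (by positivity) ((div_lt_one hx).mpr hτx) hρ⟩
    · rintro ⟨ht0, ht1⟩
      refine ⟨x * t ^ (1/ρ), ⟨by positivity, ?_⟩, ?_⟩
      · nth_rewrite 2 [show x = x * 1 by ring]
        exact mul_lt_mul_of_pos_left (Real.rpow_lt_one ht0.le ht1 (by positivity)) hx
      · simp only [hf]
        rw [mul_comm, mul_div_assoc, div_self hx.ne', mul_one,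
          ← Real.rpow_mul ht0.le, one_div, inv_mul_cancel₀ hρ.ne', Real.rpow_one]
  have hpt : ∀ τ ∈ Ioo (0:ℝ) x, |f' τ| • g (f τ) = (ρ / x ^ (ρ*(η+α))) * K τ := by
    rintro τ ⟨hτ0, hτx⟩
    have hsub : (0:ℝ) ≤ x ^ ρ - τ ^ ρ := by
      have : τ ^ ρ ≤ x ^ ρ := Real.rpow_le_rpow hτ0.le hτx.le hρ.le
      linarith
    simp only [hf, hf', hg, hK, smul_eq_mul]
    rw [abs_of_nonneg (by positivity)]
    rw [Real.div_rpow hτ0.le hx.le (ρ-1), Real.div_rpow hτ0.le hx.le ρ]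
    rw [show (1:ℝ) - τ ^ ρ / x ^ ρ = (x ^ ρ - τ ^ ρ) / x ^ ρ by
      field_simp]
    rw [Real.div_rpow (by positivity) (by positivity) ((η+1)-1),
      Real.div_rpow hsub (by positivity) (α-1)]
    simp only [← Real.rpow_mul hτ0.le, ← Real.rpow_mul hx.le]
    have hτcomb : τ ^ (ρ-1) * τ ^ (ρ*((η+1)-1)) = τ ^ (ρ*(η+1)-1) := by
      rw [← Real.rpow_add hτ0]; congr 1; ring
    have hxcomb : x ^ (ρ-1) * x ^ (ρ*((η+1)-1)) * x * x ^ (ρ*(α-1)) = x ^ (ρ*(η+α)) := by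
      nth_rewrite 3 [← Real.rpow_one x]
      rw [← Real.rpow_add hx, ← Real.rpow_add hx, ← Real.rpow_add hx]; congr 1; ring
    rw [← hxcomb, ← hτcomb]
    have p1 : (0:ℝ) < x ^ (ρ-1) := Real.rpow_pos_of_pos hx _
    have p2 : (0:ℝ) < x ^ (ρ*((η+1)-1)) := Real.rpow_pos_of_pos hx _
    have p3 : (0:ℝ) < x ^ (ρ*(α-1)) := Real.rpow_pos_of_pos hx _
    field_simp
  have key := MeasureTheory.integral_image_eq_integral_abs_deriv_smul measurableSet_Ioo hderiv hinj g
  have keyInt := MeasureTheory.integrableOn_image_iff_integrableOn_abs_deriv_smul measurableSet_Ioo hderiv hinj g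
  rw [himg] at key keyInt
  have hgi : IntegrableOn g (Ioo (0:ℝ) 1) := betaReal_int (by linarith) hα
  have hX : (0:ℝ) < x ^ (ρ*(η+α)) := Real.rpow_pos_of_pos hx _
  have hKi : IntegrableOn K (Ioo (0:ℝ) x) := by
    have h5 : IntegrableOn (fun τ => |f' τ| • g (f τ)) (Ioo (0:ℝ) x) := keyInt.mp hgi
    have h6 : IntegrableOn (fun τ => (ρ / x ^ (ρ*(η+α))) * K τ) (Ioo (0:ℝ) x) :=
      h5.congr_fun hpt measurableSet_Ioo
    have h7 : IntegrableOn
        (fun τ => (x ^ (ρ*(η+α)) / ρ) * ((ρ / x ^ (ρ*(η+α))) * K τ)) (Ioo (0:ℝ) x) :=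
      h6.const_mul _
    refine h7.congr_fun (fun τ _ => ?_) measurableSet_Ioo
    field_simp
  refine ⟨hKi, ?_⟩
  have hval : ∫ t in Ioo (0:ℝ) 1, g t = Real.Gamma (η+1) * Real.Gamma α / Real.Gamma (η+α+1) := by
    rw [hg, betaReal_val (by linarith : (0:ℝ) < η+1) hα]
    ring_nf
  rw [MeasureTheory.setIntegral_congr_fun measurableSet_Ioo hpt,
    MeasureTheory.integral_const_mul, hval] at key
  have hG : Real.Gamma (η+α+1) ≠ 0 := (Real.Gamma_pos_of_pos (by linarith)).ne'
  field_simp at key ⊢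
  linarith [key]

lemma katJ_bounds (v : ℝ → ℝ) (c C : ℝ)
    (hv : IntegrableOn v (Ici (0:ℝ)))
    (hb : ∀ t ∈ Ici (0:ℝ), c ≤ v t ∧ v t ≤ C)
    {x α ρ η : ℝ} (β k : ℝ)
    (hx : 0 < x) (hα : 0 < α) (hρ : 0 < ρ) (hη : -1 < η) :
    c * katLambda ρ β η k x α ≤ katJ ρ α β η k x v ∧
    katJ ρ α β η k x v ≤ C * katLambda ρ β η k x α := by
  obtain ⟨hKi, hKval⟩ := kernelKey hx hρ hα hη
  set K : ℝ → ℝ := fun τ => τ ^ (ρ * (η + 1) - 1) * (x ^ ρ - τ ^ ρ) ^ (α - 1) with hK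
  have hKnn : ∀ τ ∈ Ioo (0:ℝ) x, 0 ≤ K τ := fun τ hτ =>
    mul_nonneg (Real.rpow_nonneg hτ.1.le _) (Real.rpow_nonneg
      (by have := Real.rpow_le_rpow hτ.1.le hτ.2.le hρ.le; linarith) _)
  -- integrability of K * v
  have hvmeas : AEStronglyMeasurable v (volume.restrict (Ioo (0:ℝ) x)) :=
    (hv.mono_set (fun τ hτ => hτ.1.le)).aestronglyMeasurable
  have hKmeas : Measurable K := by
    rw [hK]; fun_prop
  have hKvi : IntegrableOn (fun τ => K τ * v τ) (Ioo (0:ℝ) x) := by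
    refine Integrable.mono' (hKi.const_mul (max |c| |C|))
      (hKmeas.aestronglyMeasurable.mul hvmeas) ?_
    rw [ae_restrict_iff' measurableSet_Ioo]
    refine .of_forall fun τ hτ => ?_
    have h1 : |v τ| ≤ max |c| |C| :=
      abs_le_max_abs_abs (hb τ hτ.1.le).1 (hb τ hτ.1.le).2
    calc ‖K τ * v τ‖ = K τ * |v τ| := by
          rw [norm_mul, Real.norm_eq_abs, Real.norm_eq_abs, abs_of_nonneg (hKnn τ hτ)]
      _ ≤ K τ * max |c| |C| := mul_le_mul_of_nonneg_left h1 (hKnn τ hτ)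
      _ = max |c| |C| * K τ := by ring
  -- monotonicity
  have hlow : c * ∫ τ in Ioo (0:ℝ) x, K τ ≤ ∫ τ in Ioo (0:ℝ) x, K τ * v τ := by
    rw [← MeasureTheory.integral_const_mul]
    refine MeasureTheory.setIntegral_mono_on (hKi.const_mul c) hKvi measurableSet_Ioo
      fun τ hτ => ?_
    calc c * K τ = K τ * c := by ring
      _ ≤ K τ * v τ := mul_le_mul_of_nonneg_left (hb τ hτ.1.le).1 (hKnn τ hτ)
  have hhigh : ∫ τ in Ioo (0:ℝ) x, K τ * v τ ≤ C * ∫ τ in Ioo (0:ℝ) x, K τ := by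
    rw [← MeasureTheory.integral_const_mul]
    refine MeasureTheory.setIntegral_mono_on hKvi (hKi.const_mul C) measurableSet_Ioo
      fun τ hτ => ?_
    calc K τ * v τ ≤ K τ * C := mul_le_mul_of_nonneg_left (hb τ hτ.1.le).2 (hKnn τ hτ)
      _ = C * K τ := by ring
  -- rewrite katJ
  have hP : (0:ℝ) < ρ ^ (1-β) * x ^ k / Real.Gamma α := by
    have := Real.Gamma_pos_of_pos hα
    positivity
  have hJ : katJ ρ α β η k x v
      = (ρ ^ (1-β) * x ^ k / Real.Gamma α) * ∫ τ in Ioo (0:ℝ) x, K τ * v τ := by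
    rw [katJ, intervalIntegral.integral_of_le hx.le, MeasureTheory.integral_Ioc_eq_integral_Ioo]
  have hLam : (ρ ^ (1-β) * x ^ k / Real.Gamma α) * ∫ τ in Ioo (0:ℝ) x, K τ
      = katLambda ρ β η k x α := by
    rw [hKval, katLambda]
    have hxk : x ^ k * x ^ (ρ*(η+α)) = x ^ (k + ρ*(η+α)) := (Real.rpow_add hx _ _).symm
    have hρβ : ρ ^ (1-β) = ρ * ρ ^ (-β) := by
      rw [show (1:ℝ)-β = 1 + -β by ring, Real.rpow_add hρ, Real.rpow_one]
    have hGα := (Real.Gamma_pos_of_pos hα).ne'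
    have hGs := (Real.Gamma_pos_of_pos (show (0:ℝ) < η+α+1 by linarith)).ne'
    rw [hρβ, ← hxk]
    field_simp
  constructor
  · rw [hJ, ← hLam]
    calc c * ((ρ ^ (1-β) * x ^ k / Real.Gamma α) * ∫ τ in Ioo (0:ℝ) x, K τ)
        = (ρ ^ (1-β) * x ^ k / Real.Gamma α) * (c * ∫ τ in Ioo (0:ℝ) x, K τ) := by ring
      _ ≤ _ := mul_le_mul_of_nonneg_left hlow hP.le
  · rw [hJ, ← hLam]
    calc (ρ ^ (1-β) * x ^ k / Real.Gamma α) * ∫ τ in Ioo (0:ℝ) x, K τ * v τ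
        ≤ (ρ ^ (1-β) * x ^ k / Real.Gamma α) * (C * ∫ τ in Ioo (0:ℝ) x, K τ) :=
          mul_le_mul_of_nonneg_left hhigh hP.le
      _ = _ := by ring

theorem stmt12 (v u : ℝ → ℝ) (m M n N : ℝ)
    (hv : IntegrableOn v (Ici (0:ℝ)))
    (hu : IntegrableOn u (Ici (0:ℝ)))
    (hbv : ∀ t ∈ Ici (0:ℝ), m ≤ v t ∧ v t ≤ M)
    (hbu : ∀ t ∈ Ici (0:ℝ), n ≤ u t ∧ u t ≤ N)
    (x α δ ρ β lam η k : ℝ)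
    (hx : 0 < x) (hα : 0 < α) (hδ : 0 < δ) (hρ : 0 < ρ) (hη : -1 < η) :
    m * katLambda ρ lam η k x δ * katJ ρ α β η k x u +
      N * katLambda ρ β η k x α * katJ ρ δ lam η k x v ≥
    m * N * katLambda ρ lam η k x δ * katLambda ρ β η k x α +
      katJ ρ δ lam η k x v * katJ ρ α β η k x u := by
  have h1 := (katJ_bounds v m M hv hbv lam k hx hδ hρ hη).1
  have h2 := (katJ_bounds u n N hu hbu β k hx hα hρ hη).2
  nlinarith [mul_nonneg (sub_nonneg.2 h1) (sub_nonneg.2 h2)]
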